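/- Let L be an L-class contained in a regular D-class of a finite semigroup S. Then there exists an H-class H ⊆ L which is a group, and a map f : L → H such that: (1) for all a, b ∈ L with ab ∈ L, f(ab) = f(a)f(b); and (2) for every H-class H' ⊆ L, the restriction of f to H' is a bijection from H' onto H. -/

import Mathlib

section Green

variable {S : Type*} [Semigroup S]

/-- Green's preorder `≤_L`: `a = c * b` for some `c ∈ S¹`. -/
def leL (a b : S) : Prop := a = b ∨ ∃ c, a = c * b

/-- Green's preorder `≤_R`: `a = b * c` for some `c ∈ S¹`. -/
def leR (a b : S) : Prop := a = b ∨ ∃ c, a = b * c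

/-- Green's preorder `≤_J`: `a = c * b * c'` for some `c, c' ∈ S¹`. -/
def leJ (a b : S) : Prop :=
  a = b ∨ (∃ c, a = c * b) ∨ (∃ c, a = b * c) ∨ (∃ c c', a = c * b * c')

/-- Green's relation `L`. -/
def eqL (a b : S) : Prop := leL a b ∧ leL b a

/-- Green's relation `R`. -/
def eqR (a b : S) : Prop := leR a b ∧ leR b a

/-- Green's relation `H = L ∩ R`. -/
def eqH (a b : S) : Prop := eqL a b ∧ eqR a b

/-- Green's relation `D = L ∘ R`. -/
def eqD (a b : S) : Prop := ∃ c, eqL a c ∧ eqR c b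

/-- Green's relation `J`. -/
def eqJ (a b : S) : Prop := leJ a b ∧ leJ b a

/-- `H` is an `H`-class of `S`. -/
def IsHClass (H : Set S) : Prop := ∃ a, H = {b | eqH a b}

/-- `L` is an `L`-class of `S`. -/
def IsLClass (L : Set S) : Prop := ∃ a, L = {b | eqL a b}

/-- `D` is a `D`-class of `S`. -/
def IsDClass (D : Set S) : Prop := ∃ a, D = {b | eqD a b}

/-- An `H`-class is a group if it is closed under the product and forms a
group with the induced operation. -/
def IsGroupHClass (H : Set S) : Prop :=
  (∀ a ∈ H, ∀ b ∈ H, a * b ∈ H) ∧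
  ∃ e ∈ H, e * e = e ∧
    ∀ a ∈ H, e * a = a ∧ a * e = a ∧ ∃ b ∈ H, a * b = e ∧ b * a = e

/-- A regular `D`-class: a `D`-class containing an idempotent. -/
def IsRegularDClass (D : Set S) : Prop := IsDClass D ∧ ∃ e ∈ D, e * e = e

end Green

namespace GreenAux

variable {S : Type*} [Semigroup S]

lemma finiteM [Fintype S] : Finite (WithOne S) := by
  have : Function.Surjective (fun x : Option S => show WithOne S from Option.elim x 1 (↑·)) := by
    intro c; induction c using WithOne.recOneCoe with
    | one => exact ⟨none, rfl⟩
    | coe c => exact ⟨some c, rfl⟩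
  exact Finite.of_surjective _ this

lemma mul_coe_exists (c : WithOne S) (a : S) : ∃ b : S, c * (a : WithOne S) = ↑b := by
  induction c using WithOne.recOneCoe with
  | one => exact ⟨a, one_mul _⟩
  | coe c => exact ⟨c * a, (WithOne.coe_mul c a).symm⟩

lemma leL_iff {a b : S} : leL a b ↔ ∃ c : WithOne S, (a : WithOne S) = c * b := by
  constructor
  · rintro (rfl | ⟨c, rfl⟩)
    · exact ⟨1, (one_mul _).symm⟩
    · exact ⟨c, WithOne.coe_mul c b⟩
  · rintro ⟨c, hc⟩
    induction c using WithOne.recOneCoe with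
    | one => exact Or.inl (WithOne.coe_inj.mp (by simpa using hc))
    | coe c => exact Or.inr ⟨c, WithOne.coe_inj.mp (by simpa using hc)⟩

lemma leR_iff {a b : S} : leR a b ↔ ∃ c : WithOne S, (a : WithOne S) = b * c := by
  constructor
  · rintro (rfl | ⟨c, rfl⟩)
    · exact ⟨1, (mul_one _).symm⟩
    · exact ⟨c, WithOne.coe_mul b c⟩
  · rintro ⟨c, hc⟩
    induction c using WithOne.recOneCoe with
    | one => exact Or.inl (WithOne.coe_inj.mp (by simpa using hc))
    | coe c => exact Or.inr ⟨c, WithOne.coe_inj.mp (by simpa using hc)⟩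

lemma leL_refl (a : S) : leL a a := Or.inl rfl
lemma leR_refl (a : S) : leR a a := Or.inl rfl

lemma leL_trans {a b c : S} (h1 : leL a b) (h2 : leL b c) : leL a c := by
  rw [leL_iff] at *
  obtain ⟨x, hx⟩ := h1; obtain ⟨y, hy⟩ := h2
  exact ⟨x * y, by rw [hx, hy, mul_assoc]⟩

lemma leR_trans {a b c : S} (h1 : leR a b) (h2 : leR b c) : leR a c := by
  rw [leR_iff] at *
  obtain ⟨x, hx⟩ := h1; obtain ⟨y, hy⟩ := h2
  exact ⟨y * x, by rw [hx, hy, mul_assoc]⟩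

/-- Idempotent power in a finite monoid. -/
lemma exists_idem_pow [Fintype S] (u : WithOne S) :
    ∃ n, 0 < n ∧ u ^ n * u ^ n = u ^ n := by
  have : Finite (WithOne S) := finiteM
  obtain ⟨i, j, hij, hpow⟩ := Finite.exists_ne_map_eq_of_infinite (fun n : ℕ => u ^ (n + 1))
  wlog hlt : i < j generalizing i j
  · exact this j i hij.symm hpow.symm (by omega)
  set i' := i + 1 with hi'
  set p := j - i with hp
  have hp1 : 1 ≤ p := by omega
  have hbase : u ^ (i' + p) = u ^ i' := by
    have : i' + p = j + 1 := by omega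
    rw [this]; exact hpow.symm
  have hstep : ∀ t, u ^ (i' + t + p) = u ^ (i' + t) := by
    intro t
    have h1 : i' + t + p = (i' + p) + t := by omega
    rw [h1, pow_add, hbase, ← pow_add]
  have hmul : ∀ m t, u ^ (i' + t + m * p) = u ^ (i' + t) := by
    intro m
    induction m with
    | zero => simp
    | succ m ih =>
      intro t
      have h1 : i' + t + (m + 1) * p = (i' + t + m * p) + p := by ring
      have h2 : i' + t + m * p = i' + (t + m * p) := by omega
      rw [h1, h2, hstep, ← h2, ih]
  refine ⟨i' * p, by positivity, ?_⟩
  rw [← pow_add]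
  have h3 : i' * p + i' * p = i' + (i' * p - i') + i' * p := by
    have : i' ≤ i' * p := Nat.le_mul_of_pos_right i' (by omega)
    omega
  have h4 : i' * p = i' + (i' * p - i') := by
    have : i' ≤ i' * p := Nat.le_mul_of_pos_right i' (by omega)
    omega
  rw [h3, hmul i', ← h4]

/-- Stability, L-version. -/
lemma stabL [Fintype S] {a b : S} (h1 : ∃ x y : WithOne S, (a : WithOne S) = x * b * y)
    (h2 : ∃ z : WithOne S, (b : WithOne S) = z * a) : leL a b := by
  obtain ⟨x, y, hxy⟩ := h1
  obtain ⟨z, hz⟩ := h2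
  set u := x * z with hu
  have base : (a : WithOne S) = u * a * y := by
    rw [hu, mul_assoc x z, ← hz, hxy]
  have key : ∀ n, (a : WithOne S) = u ^ n * a * y ^ n := by
    intro n
    induction n with
    | zero => simp
    | succ n ih =>
      calc (a : WithOne S) = u ^ n * a * y ^ n := ih
        _ = u ^ n * (u * a * y) * y ^ n := by rw [← base]
        _ = u ^ (n + 1) * a * y ^ (n + 1) := by
            rw [pow_succ u, pow_succ' y]; simp only [mul_assoc]
  obtain ⟨n, hn, hidem⟩ := exists_idem_pow u
  have k := key n
  have h3 : (a : WithOne S) = u ^ n * a := by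
    calc (a : WithOne S) = u ^ n * a * y ^ n := k
      _ = u ^ n * u ^ n * a * y ^ n := by rw [hidem]
      _ = u ^ n * (u ^ n * a * y ^ n) := by simp only [mul_assoc]
      _ = u ^ n * a := by rw [← k]
  obtain ⟨m, rfl⟩ : ∃ m, n = m + 1 := ⟨n - 1, by omega⟩
  rw [leL_iff]
  refine ⟨u ^ m * x, ?_⟩
  rw [h3, pow_succ, hu]
  simp only [mul_assoc, ← hz]

/-- Stability, R-version. -/
lemma stabR [Fintype S] {a b : S} (h1 : ∃ x y : WithOne S, (a : WithOne S) = x * b * y)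
    (h2 : ∃ z : WithOne S, (b : WithOne S) = a * z) : leR a b := by
  obtain ⟨x, y, hxy⟩ := h1
  obtain ⟨z, hz⟩ := h2
  set u := z * y with hu
  have base : (a : WithOne S) = x * a * u := by
    rw [hu, ← mul_assoc (x * (a : WithOne S)) z y, mul_assoc x (a : WithOne S) z, ← hz, hxy]
  have key : ∀ n, (a : WithOne S) = x ^ n * a * u ^ n := by
    intro n
    induction n with
    | zero => simp
    | succ n ih =>
      calc (a : WithOne S) = x ^ n * a * u ^ n := ih
        _ = x ^ n * (x * a * u) * u ^ n := by rw [← base]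
        _ = x ^ (n + 1) * a * u ^ (n + 1) := by
            rw [pow_succ x, pow_succ' u]; simp only [mul_assoc]
  obtain ⟨n, hn, hidem⟩ := exists_idem_pow u
  have k := key n
  have h3 : (a : WithOne S) = a * u ^ n := by
    calc (a : WithOne S) = x ^ n * a * u ^ n := k
      _ = x ^ n * a * (u ^ n * u ^ n) := by rw [hidem]
      _ = (x ^ n * a * u ^ n) * u ^ n := by simp only [mul_assoc]
      _ = a * u ^ n := by rw [← k]
  obtain ⟨m, rfl⟩ : ∃ m, n = m + 1 := ⟨n - 1, by omega⟩
  rw [leR_iff]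
  refine ⟨y * u ^ m, ?_⟩
  rw [h3, pow_succ', hu]
  calc (a : WithOne S) * (z * y * u ^ m) = (a * z) * (y * u ^ m) := by simp only [mul_assoc]
    _ = (b : WithOne S) * (y * u ^ m) := by rw [← hz]


lemma eqL_refl (a : S) : eqL a a := ⟨leL_refl a, leL_refl a⟩
lemma eqL_symm {a b : S} (h : eqL a b) : eqL b a := ⟨h.2, h.1⟩
lemma eqL_trans {a b c : S} (h1 : eqL a b) (h2 : eqL b c) : eqL a c :=
  ⟨leL_trans h1.1 h2.1, leL_trans h2.2 h1.2⟩
lemma eqR_refl (a : S) : eqR a a := ⟨leR_refl a, leR_refl a⟩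
lemma eqR_symm {a b : S} (h : eqR a b) : eqR b a := ⟨h.2, h.1⟩
lemma eqR_trans {a b c : S} (h1 : eqR a b) (h2 : eqR b c) : eqR a c :=
  ⟨leR_trans h1.1 h2.1, leR_trans h2.2 h1.2⟩
lemma eqH_refl (a : S) : eqH a a := ⟨eqL_refl a, eqR_refl a⟩
lemma eqH_symm {a b : S} (h : eqH a b) : eqH b a := ⟨eqL_symm h.1, eqR_symm h.2⟩
lemma eqH_trans {a b c : S} (h1 : eqH a b) (h2 : eqH b c) : eqH a c :=
  ⟨eqL_trans h1.1 h2.1, eqR_trans h1.2 h2.2⟩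

end GreenAux


open GreenAux in
theorem Lclass_group_retraction {S : Type*} [Semigroup S] [Fintype S]
    (Lc : Set S) (hLc : IsLClass Lc)
    (hreg : ∃ D : Set S, IsRegularDClass D ∧ Lc ⊆ D) :
    ∃ H : Set S, IsHClass H ∧ H ⊆ Lc ∧ IsGroupHClass H ∧
      ∃ f : S → S, (∀ a ∈ Lc, f a ∈ H) ∧
        (∀ a ∈ Lc, ∀ b ∈ Lc, a * b ∈ Lc → f (a * b) = f a * f b) ∧
        (∀ H' : Set S, IsHClass H' → H' ⊆ Lc → Set.BijOn f H' H) := by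
  classical
  obtain ⟨a', rfl⟩ := hLc
  have ha'Lc : a' ∈ {b | eqL a' b} := eqL_refl a'
  obtain ⟨D, ⟨⟨aD, rfl⟩, u, huD, huu⟩, hsubD⟩ := hreg
  have ha'D : eqD aD a' := hsubD ha'Lc
  obtain ⟨c₁, hL1, hR1⟩ := ha'D
  obtain ⟨c₂, hL2, hR2⟩ := huD
  -- c₂ is regular
  obtain ⟨s, hs⟩ := leR_iff.mp hR2.1
  obtain ⟨t, ht⟩ := leR_iff.mp hR2.2
  have hreg2 : (c₂ : WithOne S) = ↑c₂ * t * ↑c₂ := by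
    have h1 : (c₂ : WithOne S) = ↑u * ↑c₂ := by
      calc (c₂ : WithOne S) = ↑u * s := hs
        _ = (↑u * ↑u) * s := by rw [← WithOne.coe_mul, huu]
        _ = ↑u * (↑u * s) := mul_assoc _ _ _
        _ = ↑u * ↑c₂ := by rw [← hs]
    calc (c₂ : WithOne S) = ↑u * ↑c₂ := h1
      _ = (↑c₂ * t) * ↑c₂ := by rw [← ht]
  -- c₁ is regular
  have hL12 : eqL c₁ c₂ := eqL_trans (eqL_symm hL1) hL2
  obtain ⟨x1, hx1⟩ := leL_iff.mp hL12.1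
  obtain ⟨y1, hy1⟩ := leL_iff.mp hL12.2
  have hreg1 : (c₁ : WithOne S) = ↑c₁ * (t * y1) * ↑c₁ := by
    calc (c₁ : WithOne S) = x1 * ↑c₂ := hx1
      _ = x1 * (↑c₂ * t * ↑c₂) := by rw [← hreg2]
      _ = (x1 * ↑c₂) * t * ↑c₂ := by simp only [mul_assoc]
      _ = ↑c₁ * t * ↑c₂ := by rw [← hx1]
      _ = ↑c₁ * t * (y1 * ↑c₁) := by rw [← hy1]
      _ = ↑c₁ * (t * y1) * ↑c₁ := by simp only [mul_assoc]
  -- a' is regular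
  obtain ⟨x2, hx2⟩ := leR_iff.mp hR1.2
  obtain ⟨y2, hy2⟩ := leR_iff.mp hR1.1
  have hrega : (a' : WithOne S) = ↑a' * (y2 * (t * y1)) * ↑a' := by
    calc (a' : WithOne S) = ↑c₁ * x2 := hx2
      _ = (↑c₁ * (t * y1) * ↑c₁) * x2 := by rw [← hreg1]
      _ = ↑c₁ * (t * y1) * (↑c₁ * x2) := by simp only [mul_assoc]
      _ = ↑c₁ * (t * y1) * ↑a' := by rw [← hx2]
      _ = (↑a' * y2) * (t * y1) * ↑a' := by rw [← hy2]
      _ = ↑a' * (y2 * (t * y1)) * ↑a' := by simp only [mul_assoc]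
  set p : WithOne S := y2 * (t * y1) with hp
  obtain ⟨e, he⟩ := mul_coe_exists p a'
  have hee : e * e = e := by
    apply WithOne.coe_inj.mp
    calc ((e * e : S) : WithOne S) = (p * ↑a') * (p * ↑a') := by
          rw [WithOne.coe_mul, he]
      _ = p * (↑a' * p * ↑a') := by simp only [mul_assoc]
      _ = p * ↑a' := by rw [← hrega]
      _ = ↑e := he
  have heLc : e ∈ {b | eqL a' b} := by
    refine ⟨?_, leL_iff.mpr ⟨p, he.symm⟩⟩
    refine Or.inr ⟨a', ?_⟩
    apply WithOne.coe_inj.mp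
    rw [WithOne.coe_mul, ← he]
    calc (a' : WithOne S) = ↑a' * p * ↑a' := hrega
      _ = ↑a' * (p * ↑a') := by simp only [mul_assoc]
  have hmem : ∀ x : S, x ∈ {b | eqL a' b} ↔ eqL e x := by
    intro x
    exact ⟨fun h => eqL_trans (eqL_symm heLc) h, fun h => eqL_trans heLc h⟩
  have hxe : ∀ x ∈ {b | eqL a' b}, x * e = x := by
    intro x hx
    obtain ⟨c, hc⟩ := leL_iff.mp ((hmem x).mp hx).2
    apply WithOne.coe_inj.mp
    rw [WithOne.coe_mul]
    calc (x : WithOne S) * ↑e = (c * ↑e) * ↑e := by rw [← hc]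
      _ = c * (↑e * ↑e) := mul_assoc _ _ _
      _ = c * ↑e := by rw [← WithOne.coe_mul, hee]
      _ = ↑x := hc.symm
  have hyS : ∀ x ∈ {b | eqL a' b}, ∃ y : S, y * x = e := by
    intro x hx
    obtain ⟨c, hc⟩ := leL_iff.mp ((hmem x).mp hx).1
    induction c using WithOne.recOneCoe with
    | one =>
      have hex : e = x := WithOne.coe_inj.mp (by simpa using hc)
      exact ⟨e, by rw [← hex, hee]⟩
    | coe y => exact ⟨y, WithOne.coe_inj.mp (by rw [WithOne.coe_mul]; exact hc.symm)⟩
  have hHsub : {b | eqH e b} ⊆ {b | eqL a' b} := fun b hb => (hmem b).mpr hb.1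
  have heH : ∀ x : S, eqH e x → e * x = x := by
    intro x hx
    obtain ⟨c, hc⟩ := leR_iff.mp hx.2.2
    apply WithOne.coe_inj.mp
    rw [WithOne.coe_mul]
    calc (e : WithOne S) * ↑x = ↑e * (↑e * c) := by rw [← hc]
      _ = (↑e * ↑e) * c := (mul_assoc _ _ _).symm
      _ = ↑e * c := by rw [← WithOne.coe_mul, hee]
      _ = ↑x := hc.symm
  have hclosure : ∀ a ∈ {b | eqH e b}, ∀ b ∈ {b | eqH e b}, a * b ∈ {b | eqH e b} := by
    intro a ha b hb
    obtain ⟨ca, hca⟩ := leR_iff.mp ha.2.2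
    obtain ⟨wa, hwa⟩ := leR_iff.mp ha.2.1
    obtain ⟨vb, hvb⟩ := leR_iff.mp hb.2.1
    obtain ⟨cb, hcb⟩ := leR_iff.mp hb.2.2
    obtain ⟨db, hdb⟩ := leL_iff.mp hb.1.2
    obtain ⟨ub, hub⟩ := leL_iff.mp hb.1.1
    obtain ⟨ua, hua⟩ := leL_iff.mp ha.1.1
    have heb : (e : WithOne S) * ↑b = ↑b := by
      calc (e : WithOne S) * ↑b = ↑e * (↑e * cb) := by rw [← hcb]
        _ = (↑e * ↑e) * cb := (mul_assoc _ _ _).symm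
        _ = ↑e * cb := by rw [← WithOne.coe_mul, hee]
        _ = ↑b := hcb.symm
    have hae : (a : WithOne S) * ↑e = ↑a := by
      rw [← WithOne.coe_mul, hxe a (hHsub ha)]
    refine ⟨⟨?_, ?_⟩, ?_, ?_⟩
    · -- leL e (a*b)
      refine leL_iff.mpr ⟨ub * ua, ?_⟩
      calc (e : WithOne S) = ub * ↑b := hub
        _ = ub * (↑e * ↑b) := by rw [heb]
        _ = ub * ((ua * ↑a) * ↑b) := by rw [← hua]
        _ = (ub * ua) * (↑a * ↑b) := by simp only [mul_assoc]
        _ = (ub * ua) * ↑(a * b) := by rw [← WithOne.coe_mul]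
    · -- leL (a*b) e
      refine leL_iff.mpr ⟨↑a * db, ?_⟩
      calc ((a * b : S) : WithOne S) = ↑a * ↑b := WithOne.coe_mul a b
        _ = ↑a * (db * ↑e) := by rw [← hdb]
        _ = (↑a * db) * ↑e := (mul_assoc _ _ _).symm
    · -- leR e (a*b)
      refine leR_iff.mpr ⟨vb * wa, ?_⟩
      calc (e : WithOne S) = ↑a * wa := hwa
        _ = (↑a * ↑e) * wa := by rw [hae]
        _ = (↑a * (↑b * vb)) * wa := by rw [← hvb]
        _ = (↑a * ↑b) * (vb * wa) := by simp only [mul_assoc]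
        _ = ↑(a * b) * (vb * wa) := by rw [← WithOne.coe_mul]
    · -- leR (a*b) e
      refine leR_iff.mpr ⟨ca * ↑b, ?_⟩
      calc ((a * b : S) : WithOne S) = ↑a * ↑b := WithOne.coe_mul a b
        _ = (↑e * ca) * ↑b := by rw [← hca]
        _ = ↑e * (ca * ↑b) := mul_assoc _ _ _
  have hpowH : ∀ n : ℕ, ∀ a : S, eqH e a →
      ∃ b : S, ((a : WithOne S)) ^ (n + 1) = ↑b ∧ eqH e b := by
    intro n
    induction n with
    | zero => intro a ha; exact ⟨a, pow_one _, ha⟩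
    | succ n ih =>
      intro a ha
      obtain ⟨b, hb, hbH⟩ := ih a ha
      exact ⟨b * a, by rw [pow_succ, hb, WithOne.coe_mul], hclosure b hbH a ha⟩
  have hidemH : ∀ c : S, eqH e c → c * c = c → c = e := by
    intro c hc hcc
    obtain ⟨d, hd⟩ := leL_iff.mp hc.1.1
    have : (e : WithOne S) = ↑c := by
      calc (e : WithOne S) = d * ↑c := hd
        _ = d * (↑c * ↑c) := by rw [← WithOne.coe_mul, hcc]
        _ = (d * ↑c) * ↑c := (mul_assoc _ _ _).symm
        _ = ↑e * ↑c := by rw [← hd]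
        _ = ↑c := by rw [← WithOne.coe_mul, heH c hc]
    exact (WithOne.coe_inj.mp this).symm
  have hinv : ∀ a : S, eqH e a → ∃ b : S, eqH e b ∧ a * b = e ∧ b * a = e := by
    intro a ha
    obtain ⟨n, hn, hni⟩ := exists_idem_pow (a : WithOne S)
    obtain ⟨m, rfl⟩ : ∃ m, n = m + 1 := ⟨n - 1, by omega⟩
    obtain ⟨c, hc, hcH⟩ := hpowH m a ha
    have hcc : c * c = c := by
      apply WithOne.coe_inj.mp
      rw [WithOne.coe_mul, ← hc, hni]
    have hce : c = e := hidemH c hcH hcc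
    have hpe : ((a : WithOne S)) ^ (m + 1) = ↑e := by rw [hc, hce]
    cases m with
    | zero =>
      have hae : a = e := WithOne.coe_inj.mp (by simpa using hpe)
      exact ⟨e, eqH_refl e, by rw [hae, hee], by rw [hae, hee]⟩
    | succ m' =>
      obtain ⟨b, hb, hbH⟩ := hpowH m' a ha
      refine ⟨b, hbH, ?_, ?_⟩
      · apply WithOne.coe_inj.mp
        rw [WithOne.coe_mul, ← hb, ← pow_succ', hpe]
      · apply WithOne.coe_inj.mp
        rw [WithOne.coe_mul, ← hb, ← pow_succ, hpe]
  -- the retraction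
  have hNe : Nonempty S := ⟨e⟩
  set P : S → S → Prop :=
    fun x z => eqH x z ∧ ((∃ w, eqH x w ∧ w * w = w) → z * z = z) with hP
  set rep : S → S := fun x => Classical.epsilon (P x) with hrepdef
  have hPex : ∀ x : S, ∃ z, P x z := by
    intro x
    by_cases h : ∃ w, eqH x w ∧ w * w = w
    · obtain ⟨w, hw1, hw2⟩ := h
      exact ⟨w, hw1, fun _ => hw2⟩
    · exact ⟨x, eqH_refl x, fun hh => absurd hh h⟩
  have hrep_spec : ∀ x : S, P x (rep x) := fun x => Classical.epsilon_spec (hPex x)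
  have hrep_congr : ∀ x x' : S, eqH x x' → rep x = rep x' := by
    intro x x' h
    have hfun : P x = P x' := by
      funext z
      apply propext
      constructor
      · rintro ⟨h1, h2⟩
        exact ⟨eqH_trans (eqH_symm h) h1,
          fun hw => h2 (by obtain ⟨w, hw1, hw2⟩ := hw; exact ⟨w, eqH_trans h hw1, hw2⟩)⟩
      · rintro ⟨h1, h2⟩
        exact ⟨eqH_trans h h1,
          fun hw => h2 (by obtain ⟨w, hw1, hw2⟩ := hw; exact ⟨w, eqH_trans (eqH_symm h) hw1, hw2⟩)⟩
    simp only [hrepdef, hfun]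
  set yf : S → S := fun r => Classical.epsilon (fun y => y * r = e) with hyfdef
  have hyf_spec : ∀ r ∈ {b | eqL a' b}, (yf r) * r = e := by
    intro r hr
    exact Classical.epsilon_spec (hyS r hr)
  set f : S → S := fun x => yf (rep x) * x with hfdef
  have hrepLc : ∀ x ∈ {b | eqL a' b}, rep x ∈ {b | eqL a' b} := by
    intro x hx
    exact (hmem _).mpr (eqL_trans ((hmem x).mp hx) ((hrep_spec x).1).1)
  -- f maps Lc into H
  have hfH : ∀ x ∈ {b | eqL a' b}, eqH e (f x) := by
    intro x hx
    have hxr : eqH x (rep x) := (hrep_spec x).1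
    have hrLc := hrepLc x hx
    have hy : yf (rep x) * rep x = e := hyf_spec _ hrLc
    obtain ⟨s, hs⟩ := leR_iff.mp hxr.2.1
    obtain ⟨s', hs'⟩ := leR_iff.mp hxr.2.2
    have hfx : f x = yf (rep x) * x := rfl
    have hA : ((yf (rep x) * x : S) : WithOne S) = ↑e * s := by
      rw [WithOne.coe_mul]
      calc (yf (rep x) : WithOne S) * ↑x = ↑(yf (rep x)) * (↑(rep x) * s) := by rw [← hs]
        _ = (↑(yf (rep x)) * ↑(rep x)) * s := (mul_assoc _ _ _).symm
        _ = ↑e * s := by rw [← WithOne.coe_mul, hy]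
    have hB : (e : WithOne S) = ↑(yf (rep x) * x) * s' := by
      rw [WithOne.coe_mul]
      calc (e : WithOne S) = ↑(yf (rep x)) * ↑(rep x) := by rw [← WithOne.coe_mul, hy]
        _ = ↑(yf (rep x)) * (↑x * s') := by rw [← hs']
        _ = (↑(yf (rep x)) * ↑x) * s' := (mul_assoc _ _ _).symm
    have hC : leL (yf (rep x) * x) e := by
      refine Or.inr ⟨yf (rep x) * x, ?_⟩
      rw [mul_assoc, hxe x hx]
    have hD : leL e (yf (rep x) * x) := by
      apply stabL
      · exact ⟨1, s', by rw [one_mul]; exact hB⟩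
      · obtain ⟨cc, hcc2⟩ := leL_iff.mp hC
        exact ⟨cc, hcc2⟩
    rw [hfx]
    exact ⟨⟨hD, hC⟩, ⟨leR_iff.mpr ⟨s', hB⟩, leR_iff.mpr ⟨s, hA⟩⟩⟩
  -- multiplicativity
  have hmult : ∀ a ∈ {b | eqL a' b}, ∀ b ∈ {b | eqL a' b},
      a * b ∈ {b | eqL a' b} → f (a * b) = f a * f b := by
    intro a ha b hb hab
    obtain ⟨w, hw⟩ := leL_iff.mp ((hmem b).mp hb).1
    have hbab : leL b (a * b) := leL_trans ((hmem b).mp hb).2 ((hmem (a * b)).mp hab).1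
    obtain ⟨t3, ht3⟩ := leL_iff.mp hbab
    have haR : leR a (a * b) := by
      apply stabR
      · refine ⟨↑a * w * t3, 1, ?_⟩
        rw [mul_one]
        calc (a : WithOne S) = ↑(a * e) := by rw [hxe a ha]
          _ = ↑a * ↑e := WithOne.coe_mul _ _
          _ = ↑a * (w * ↑b) := by rw [hw]
          _ = ↑a * (w * (t3 * ↑(a * b))) := by rw [ht3]
          _ = ↑a * w * t3 * ↑(a * b) := by simp only [mul_assoc]
      · exact ⟨↑b, (WithOne.coe_mul a b).symm⟩
    have heqH_ab_a : eqH (a * b) a :=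
      ⟨eqL_trans (eqL_symm ((hmem (a * b)).mp hab)) ((hmem a).mp ha),
        ⟨Or.inr ⟨b, rfl⟩, haR⟩⟩
    have hrepab : rep (a * b) = rep a := hrep_congr _ _ heqH_ab_a
    -- an idempotent in the H-class of b
    obtain ⟨w', hw'⟩ := leL_iff.mp ((hmem (a * b)).mp hab).1
    obtain ⟨v, hv⟩ := mul_coe_exists w' a
    have hqM : ((b * v : S) : WithOne S) = ↑b * (w' * ↑a) := by
      rw [WithOne.coe_mul, hv]
    have hqb : (b * v) * b = b := by
      apply WithOne.coe_inj.mp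
      rw [WithOne.coe_mul, hqM]
      calc (b : WithOne S) * (w' * ↑a) * ↑b = ↑b * (w' * (↑a * ↑b)) := by
            simp only [mul_assoc]
        _ = ↑b * (w' * ↑(a * b)) := by rw [← WithOne.coe_mul]
        _ = ↑b * ↑e := by rw [← hw']
        _ = ↑(b * e) := (WithOne.coe_mul _ _).symm
        _ = ↑b := by rw [hxe b hb]
    have hqbM : ((b * v : S) : WithOne S) * ↑b = ↑b := by
      rw [← WithOne.coe_mul, hqb]
    have hqq : (b * v) * (b * v) = (b * v) := by
      apply WithOne.coe_inj.mp
      rw [WithOne.coe_mul]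
      calc ((b * v : S) : WithOne S) * ↑(b * v) = ↑(b * v) * (↑b * (w' * ↑a)) := by
            nth_rewrite 2 [hqM]; rfl
        _ = (↑(b * v) * ↑b) * (w' * ↑a) := (mul_assoc _ _ _).symm
        _ = ↑b * (w' * ↑a) := by rw [hqbM]
        _ = ↑(b * v) := hqM.symm
    have hqR : eqR b (b * v) := by
      refine ⟨leR_iff.mpr ⟨↑b, hqbM.symm⟩, leR_iff.mpr ⟨w' * ↑a, hqM⟩⟩
    have hqa : leL (b * v) a := leL_iff.mpr ⟨↑b * w', by rw [hqM]; simp only [mul_assoc]⟩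
    have haq : leL a (b * v) := by
      apply stabL
      · obtain ⟨s2, hs2⟩ :=
          leL_iff.mp (leL_trans ((hmem a).mp ha).2 ((hmem b).mp hb).1)
        refine ⟨s2, ↑b, ?_⟩
        calc (a : WithOne S) = s2 * ↑b := hs2
          _ = s2 * (↑(b * v) * ↑b) := by rw [hqbM]
          _ = s2 * ↑(b * v) * ↑b := by simp only [mul_assoc]
      · exact ⟨↑b * w', by rw [hqM]; simp only [mul_assoc]⟩
    have hqLc : (b * v) ∈ {b | eqL a' b} :=
      (hmem _).mpr (eqL_trans ((hmem a).mp ha) ⟨haq, hqa⟩)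
    have hbq : eqH b (b * v) :=
      ⟨eqL_trans (eqL_symm ((hmem b).mp hb)) ((hmem _).mp hqLc), hqR⟩
    have hrepb_idem : rep b * rep b = rep b := (hrep_spec b).2 ⟨b * v, hbq, hqq⟩
    have hg'H : eqH b (rep b) := (hrep_spec b).1
    have hg'Lc : rep b ∈ {b | eqL a' b} := hrepLc b hb
    have hyb : yf (rep b) * rep b = e := hyf_spec _ hg'Lc
    have hg'b : rep b * b = b := by
      obtain ⟨c, hc⟩ := leR_iff.mp hg'H.2.1
      apply WithOne.coe_inj.mp
      rw [WithOne.coe_mul]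
      calc (rep b : WithOne S) * ↑b = ↑(rep b) * (↑(rep b) * c) := by rw [← hc]
        _ = (↑(rep b) * ↑(rep b)) * c := (mul_assoc _ _ _).symm
        _ = ↑(rep b) * c := by rw [← WithOne.coe_mul, hrepb_idem]
        _ = ↑b := hc.symm
    have hybb : yf (rep b) * b = e * b := by
      calc yf (rep b) * b = yf (rep b) * (rep b * b) := by rw [hg'b]
        _ = (yf (rep b) * rep b) * b := (mul_assoc _ _ _).symm
        _ = e * b := by rw [hyb]
    show yf (rep (a * b)) * (a * b) = (yf (rep a) * a) * (yf (rep b) * b)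
    rw [hrepab, hybb]
    calc yf (rep a) * (a * b) = yf (rep a) * ((a * e) * b) := by rw [hxe a ha]
      _ = (yf (rep a) * a) * (e * b) := by simp only [mul_assoc]
  -- assemble
  refine ⟨{b | eqH e b}, ⟨e, rfl⟩, hHsub, ⟨hclosure, e, eqH_refl e, hee, ?_⟩,
    f, fun a ha => hfH a ha, hmult, ?_⟩
  · intro a ha
    exact ⟨heH a ha, hxe a (hHsub ha), hinv a ha⟩
  · -- bijections on H-classes
    intro H' hH' hsub'
    obtain ⟨a₂, rfl⟩ := hH'
    have ha₂H' : a₂ ∈ {b | eqH a₂ b} := eqH_refl a₂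
    have ha₂Lc : a₂ ∈ {b | eqL a' b} := hsub' ha₂H'
    have hrLc : rep a₂ ∈ {b | eqL a' b} := hrepLc a₂ ha₂Lc
    have hy : yf (rep a₂) * rep a₂ = e := hyf_spec _ hrLc
    have hrepx : ∀ x : S, eqH a₂ x → rep x = rep a₂ :=
      fun x hx => hrep_congr _ _ (eqH_symm hx)
    have hre : rep a₂ * e = rep a₂ := hxe _ hrLc
    have hrecov : ∀ x : S, eqH a₂ x → rep a₂ * f x = x := by
      intro x hx
      have hfx : f x = yf (rep a₂) * x := by
        show yf (rep x) * x = yf (rep a₂) * x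
        rw [hrepx x hx]
      obtain ⟨s, hs⟩ := leR_iff.mp (leR_trans hx.2.2 (hrep_spec a₂).1.2.1)
      rw [hfx]
      apply WithOne.coe_inj.mp
      rw [WithOne.coe_mul, WithOne.coe_mul]
      calc (rep a₂ : WithOne S) * (↑(yf (rep a₂)) * ↑x)
          = ↑(rep a₂) * (↑(yf (rep a₂)) * (↑(rep a₂) * s)) := by rw [← hs]
        _ = ↑(rep a₂) * ((↑(yf (rep a₂)) * ↑(rep a₂)) * s) := by simp only [mul_assoc]
        _ = ↑(rep a₂) * (↑e * s) := by
            rw [← WithOne.coe_mul (yf (rep a₂)) (rep a₂), hy]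
        _ = (↑(rep a₂) * ↑e) * s := (mul_assoc _ _ _).symm
        _ = ↑(rep a₂) * s := by rw [← WithOne.coe_mul, hre]
        _ = ↑x := hs.symm
    refine ⟨fun x hx => hfH x (hsub' hx), ?_, ?_⟩
    · intro x hx x' hx' hfe
      rw [← hrecov x hx, ← hrecov x' hx', hfe]
    · intro h hh
      obtain ⟨c, hc⟩ := leR_iff.mp hh.2.2
      obtain ⟨cR, hcR⟩ := leR_iff.mp hh.2.1
      obtain ⟨d, hd⟩ := leL_iff.mp hh.1.2
      obtain ⟨d₂, hd₂⟩ := leL_iff.mp ((hmem (rep a₂)).mp hrLc).1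
      have h1 : (rep a₂ : WithOne S) = ↑(rep a₂ * h) * cR := by
        rw [WithOne.coe_mul]
        calc (rep a₂ : WithOne S) = ↑(rep a₂ * e) := by rw [hre]
          _ = ↑(rep a₂) * ↑e := WithOne.coe_mul _ _
          _ = ↑(rep a₂) * (↑h * cR) := by rw [hcR]
          _ = (↑(rep a₂) * ↑h) * cR := (mul_assoc _ _ _).symm
      have h2 : leR (rep a₂) (rep a₂ * h) := leR_iff.mpr ⟨cR, h1⟩
      have h3 : leR (rep a₂ * h) (rep a₂) := Or.inr ⟨h, rfl⟩
      have h4M : ((rep a₂ * h : S) : WithOne S) = (↑(rep a₂) * d) * ↑e := by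
        rw [WithOne.coe_mul]
        calc (rep a₂ : WithOne S) * ↑h = ↑(rep a₂) * (d * ↑e) := by rw [hd]
          _ = (↑(rep a₂) * d) * ↑e := (mul_assoc _ _ _).symm
      have h4 : leL (rep a₂ * h) e := leL_iff.mpr ⟨↑(rep a₂) * d, h4M⟩
      have h5 : leL e (rep a₂ * h) := by
        apply stabL
        · refine ⟨d₂, cR, ?_⟩
          calc (e : WithOne S) = d₂ * ↑(rep a₂) := hd₂
            _ = d₂ * (↑(rep a₂ * h) * cR) := by rw [← h1]
            _ = d₂ * ↑(rep a₂ * h) * cR := by simp only [mul_assoc]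
        · exact ⟨↑(rep a₂) * d, h4M⟩
      have hrhLc : rep a₂ * h ∈ {b | eqL a' b} := (hmem _).mpr ⟨h5, h4⟩
      have hmemH' : eqH a₂ (rep a₂ * h) := by
        refine eqH_trans (hrep_spec a₂).1 ?_
        exact ⟨eqL_trans (eqL_symm ((hmem _).mp hrLc)) ((hmem _).mp hrhLc), ⟨h2, h3⟩⟩
      refine ⟨rep a₂ * h, hmemH', ?_⟩
      have hfx : f (rep a₂ * h) = yf (rep a₂) * (rep a₂ * h) := by
        show yf (rep (rep a₂ * h)) * (rep a₂ * h) = yf (rep a₂) * (rep a₂ * h)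
        rw [hrepx _ hmemH']
      rw [hfx, ← mul_assoc, hy]
      exact heH h hh
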